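/- Suppose for each iteration t ≥ 0 and every λ in ℝⁿ and ω in ℝᵐ: Φ(λᵗ⁺¹) − Φ(λ) ≤ ‖λ − λᵗ‖²_M − ‖λ − λᵗ⁺¹‖²_M + ‖ω − ωᵗ‖²_N − ‖ω − ωᵗ⁺¹‖²_N + (ωᵗ⁺¹)ᵀZλ − ωᵀZλᵗ⁺¹, where M, N are symmetric positive semidefinite and Φ is convex with Zλ* = 0 for a minimizer λ* satisfying Φ(λ) − Φ(λ*) + (ω*)ᵀZλ ≥ 0 for all λ. Then with λ̄^{T+1} = (1/(T+1))∑_{t=0}^{T} λᵗ⁺¹: (T+1)·( Φ(λ̄^{T+1}) − Φ(λ*) + 2‖ω*‖·‖Zλ̄^{T+1}‖ ) ≤ ‖2‖ω*‖·e − ω⁰‖²_N + ‖λ* − λ⁰‖²_M, where e = Zλ̄^{T+1}/‖Zλ̄^{T+1}‖ (assuming Zλ̄^{T+1} ≠ 0). -/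

import Mathlib

open Set Matrix Finset

/-- Weighted squared seminorm `uᵀXu`. -/
noncomputable def wsq {n : ℕ} (X : Matrix (Fin n) (Fin n) ℝ) (u : Fin n → ℝ) : ℝ :=
  u ⬝ᵥ X.mulVec u

/-- Euclidean norm of a vector in `ℝⁿ`. -/
noncomputable def enorm' {n : ℕ} (u : Fin n → ℝ) : ℝ := Real.sqrt (u ⬝ᵥ u)

theorem dp_sum {m : ℕ} {ι : Type*} (s : Finset ι) (w : Fin m → ℝ) (f : ι → Fin m → ℝ) :
    w ⬝ᵥ (∑ i ∈ s, f i) = ∑ i ∈ s, w ⬝ᵥ f i := by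
  simp [dotProduct, Finset.mul_sum]
  exact Finset.sum_comm

theorem wsq_nonneg {n : ℕ} {X : Matrix (Fin n) (Fin n) ℝ} (hX : X.PosSemidef)
    (u : Fin n → ℝ) : 0 ≤ wsq X u := by
  have := hX.dotProduct_mulVec_nonneg u
  simpa [wsq] using this


/-- Summed ergodic bound for the CDPG analysis: from the per-iteration inequality,
setting `λ = λ*` and `ω = 2‖ω*‖e` with `e = Zλ̄/‖Zλ̄‖`, summing and telescoping gives
`(T+1)(Φ(λ̄) − Φ(λ*) + 2‖ω*‖‖Zλ̄‖) ≤ ‖2‖ω*‖e − ω⁰‖²_N + ‖λ* − λ⁰‖²_M`. -/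
theorem stmt_18 {n m : ℕ}
    (Mm : Matrix (Fin n) (Fin n) ℝ) (hM : Mm.PosSemidef)
    (Nn : Matrix (Fin m) (Fin m) ℝ) (hN : Nn.PosSemidef)
    (Φ : (Fin n → ℝ) → ℝ) (hΦ : ConvexOn ℝ univ Φ)
    (Z : Matrix (Fin m) (Fin n) ℝ)
    (lam : ℕ → Fin n → ℝ) (om : ℕ → Fin m → ℝ)
    (lamstar : Fin n → ℝ) (omstar : Fin m → ℝ)
    (hZstar : Z.mulVec lamstar = 0)
    (hopt : ∀ l : Fin n → ℝ, 0 ≤ Φ l - Φ lamstar + omstar ⬝ᵥ Z.mulVec l)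
    (hiter : ∀ (t : ℕ) (l : Fin n → ℝ) (w : Fin m → ℝ),
      Φ (lam (t + 1)) - Φ l ≤
        wsq Mm (l - lam t) - wsq Mm (l - lam (t + 1))
        + wsq Nn (w - om t) - wsq Nn (w - om (t + 1))
        + om (t + 1) ⬝ᵥ Z.mulVec l - w ⬝ᵥ Z.mulVec (lam (t + 1)))
    (T : ℕ) (lambar : Fin n → ℝ)
    (hbar : lambar = ((T + 1 : ℝ))⁻¹ • ∑ t ∈ Finset.range (T + 1), lam (t + 1))
    (hne : Z.mulVec lambar ≠ 0)
    (e : Fin m → ℝ) (he : e = (enorm' (Z.mulVec lambar))⁻¹ • Z.mulVec lambar) :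
    (T + 1 : ℝ) * (Φ lambar - Φ lamstar
        + 2 * enorm' omstar * enorm' (Z.mulVec lambar)) ≤
      wsq Nn ((2 * enorm' omstar) • e - om 0) + wsq Mm (lamstar - lam 0) := by
  have hT : (0:ℝ) < T + 1 := by positivity
  set v := Z.mulVec lambar with hv
  set K := 2 * enorm' omstar with hK
  set w : Fin m → ℝ := K • e with hw
  -- positivity of v ⬝ᵥ v
  have hvv : (0:ℝ) < v ⬝ᵥ v := by
    have h0 : 0 ≤ v ⬝ᵥ v := by
      exact Finset.sum_nonneg fun i _ => mul_self_nonneg _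
    rcases h0.lt_or_eq with h | h
    · exact h
    · exact absurd (dotProduct_self_eq_zero.mp h.symm) hne
  have hEnpos : 0 < enorm' v := Real.sqrt_pos.mpr hvv
  have hev : e ⬝ᵥ v = enorm' v := by
    rw [he, smul_dotProduct]
    have : v ⬝ᵥ v = enorm' v * enorm' v := (Real.mul_self_sqrt hvv.le).symm
    rw [this]
    rw [smul_eq_mul]
    field_simp
  have hwv : w ⬝ᵥ v = K * enorm' v := by
    rw [hw, smul_dotProduct, hev]; simp
  -- sum of lam(t+1)
  have hS : (∑ t ∈ Finset.range (T + 1), lam (t + 1)) = (T + 1 : ℝ) • lambar := by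
    rw [hbar, smul_smul]
    rw [mul_inv_cancel₀ hT.ne', one_smul]
  -- per-step inequality with l = lamstar, w
  have hstep : ∀ t, Φ (lam (t + 1)) - Φ lamstar ≤
      (wsq Mm (lamstar - lam t) - wsq Mm (lamstar - lam (t + 1)))
      + (wsq Nn (w - om t) - wsq Nn (w - om (t + 1)))
      - w ⬝ᵥ Z.mulVec (lam (t + 1)) := by
    intro t
    have := hiter t lamstar w
    rw [hZstar] at this
    simp only [dotProduct_zero, add_zero] at this
    linarith
  -- sum it
  have hsum : (∑ t ∈ Finset.range (T + 1), Φ (lam (t + 1))) - (T + 1 : ℝ) * Φ lamstar ≤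
      (wsq Mm (lamstar - lam 0) - wsq Mm (lamstar - lam (T + 1)))
      + (wsq Nn (w - om 0) - wsq Nn (w - om (T + 1)))
      - (T + 1 : ℝ) * (K * enorm' v) := by
    have h1 : ∑ t ∈ Finset.range (T + 1), (Φ (lam (t + 1)) - Φ lamstar) ≤
        ∑ t ∈ Finset.range (T + 1),
          ((wsq Mm (lamstar - lam t) - wsq Mm (lamstar - lam (t + 1)))
          + (wsq Nn (w - om t) - wsq Nn (w - om (t + 1)))
          - w ⬝ᵥ Z.mulVec (lam (t + 1))) :=
      Finset.sum_le_sum fun t _ => hstep t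
    have hL : ∑ t ∈ Finset.range (T + 1), (Φ (lam (t + 1)) - Φ lamstar) =
        (∑ t ∈ Finset.range (T + 1), Φ (lam (t + 1))) - (T + 1 : ℝ) * Φ lamstar := by
      rw [Finset.sum_sub_distrib, Finset.sum_const, Finset.card_range]
      push_cast; ring
    have hM1 : ∑ t ∈ Finset.range (T + 1),
        (wsq Mm (lamstar - lam t) - wsq Mm (lamstar - lam (t + 1)))
        = wsq Mm (lamstar - lam 0) - wsq Mm (lamstar - lam (T + 1)) :=
      Finset.sum_range_sub' (fun t => wsq Mm (lamstar - lam t)) (T + 1)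
    have hN1 : ∑ t ∈ Finset.range (T + 1),
        (wsq Nn (w - om t) - wsq Nn (w - om (t + 1)))
        = wsq Nn (w - om 0) - wsq Nn (w - om (T + 1)) :=
      Finset.sum_range_sub' (fun t => wsq Nn (w - om t)) (T + 1)
    have hZ1 : ∑ t ∈ Finset.range (T + 1), w ⬝ᵥ Z.mulVec (lam (t + 1))
        = (T + 1 : ℝ) * (K * enorm' v) := by
      have : ∑ t ∈ Finset.range (T + 1), w ⬝ᵥ Z.mulVec (lam (t + 1))
          = w ⬝ᵥ Z.mulVec (∑ t ∈ Finset.range (T + 1), lam (t + 1)) := by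
        rw [← dp_sum]
        congr 1
        exact (map_sum (Matrix.mulVecLin Z) _ _).symm
      rw [this, hS, Matrix.mulVec_smul, dotProduct_smul, smul_eq_mul, ← hv, hwv]
    calc (∑ t ∈ Finset.range (T + 1), Φ (lam (t + 1))) - (T + 1 : ℝ) * Φ lamstar
        = ∑ t ∈ Finset.range (T + 1), (Φ (lam (t + 1)) - Φ lamstar) := hL.symm
      _ ≤ _ := h1
      _ = _ := by rw [Finset.sum_sub_distrib, Finset.sum_add_distrib, hM1, hN1, hZ1]
  -- Jensen
  have hJ : (T + 1 : ℝ) * Φ lambar ≤ ∑ t ∈ Finset.range (T + 1), Φ (lam (t + 1)) := by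
    have hmap := hΦ.map_sum_le (t := Finset.range (T + 1))
      (w := fun _ => ((T : ℝ) + 1)⁻¹) (p := fun t => lam (t + 1))
      (fun i _ => by positivity)
      (by simp [Finset.card_range]; field_simp)
      (fun i _ => mem_univ _)
    simp only [smul_eq_mul] at hmap
    have hbar' : lambar = ∑ t ∈ Finset.range (T + 1), ((T : ℝ) + 1)⁻¹ • lam (t + 1) := by
      rw [hbar, Finset.smul_sum]
    rw [← hbar'] at hmap
    have : ∑ t ∈ Finset.range (T + 1), ((T : ℝ) + 1)⁻¹ * Φ (lam (t + 1))
        = ((T : ℝ) + 1)⁻¹ * ∑ t ∈ Finset.range (T + 1), Φ (lam (t + 1)) := by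
      rw [Finset.mul_sum]
    rw [this] at hmap
    calc (T + 1 : ℝ) * Φ lambar ≤ (T + 1 : ℝ) * (((T : ℝ) + 1)⁻¹ *
          ∑ t ∈ Finset.range (T + 1), Φ (lam (t + 1))) := by
          exact mul_le_mul_of_nonneg_left hmap hT.le
      _ = _ := by field_simp
  have hMn := wsq_nonneg hM (lamstar - lam (T + 1))
  have hNn := wsq_nonneg hN (w - om (T + 1))
  have : (T + 1 : ℝ) * (Φ lambar - Φ lamstar + K * enorm' v) ≤
      wsq Nn (w - om 0) + wsq Mm (lamstar - lam 0) := by nlinarith [hsum, hJ]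
  calc (T + 1 : ℝ) * (Φ lambar - Φ lamstar + 2 * enorm' omstar * enorm' (Z.mulVec lambar))
      = (T + 1 : ℝ) * (Φ lambar - Φ lamstar + K * enorm' v) := by rw [hK, hv]
    _ ≤ _ := this
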